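/- In the structure monoid of a finite cycle set, g_1 left-divides g_2 if and only if cp(g_1) ≤ cp(g_2) componentwise, where cp(g) = (c_1,...,c_n) records the powers of q in the diagonal part of Θ(g). -/

import Mathlib

/-- Dehornoy's `Ω` expression: `Omega op k t` is `Ω_{k+1}(t 0, …, t k)`,
defined by `Ω_1(x) = x` and
`Ω_k(x_1,…,x_k) = Ω_{k-1}(x_1,…,x_{k-1}) * Ω_{k-1}(x_1,…,x_{k-2},x_k)`. -/
def Omega {S : Type*} (op : S → S → S) : (k : ℕ) → (Fin (k + 1) → S) → S
  | 0, t => t 0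
  | k + 1, t =>
      op (Omega op k fun i => t i.castSucc)
        (Omega op k fun i =>
          if i = Fin.last k then t (Fin.last (k + 1)) else t i.castSucc)

/-- Dehornoy's `Π` expression: `PiExpr op ι k t = ι(Ω_1(t_1)) ⋯ ι(Ω_k(t_1,…,t_k))`. -/
def PiExpr {S M : Type*} [Monoid M] (op : S → S → S) (ι : S → M) :
    (k : ℕ) → (Fin k → S) → M
  | 0, _ => 1
  | k + 1, t => PiExpr op ι k (fun i => t i.castSucc) * ι (Omega op k t)

/-- The defining relations of the structure monoid: `s (s*t) = t (t*s)`. -/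
def csRel {S : Type*} (op : S → S → S) (a b : FreeMonoid S) : Prop :=
  ∃ s t : S, a = FreeMonoid.of s * FreeMonoid.of (op s t) ∧
    b = FreeMonoid.of t * FreeMonoid.of (op t s)

/-- The structure monoid `⟨S ∣ s(s*t) = t(t*s)⟩⁺` of a cycle set. -/
abbrev StructureMonoid {S : Type*} (op : S → S → S) := (conGen (csRel op)).Quotient

/-- The canonical generators of the structure monoid. -/
def mkM {S : Type*} (op : S → S → S) (s : S) : StructureMonoid op :=
  (conGen (csRel op)).mk' (FreeMonoid.of s)

/-- The permutation matrix of `σ`: row `i` has a `1` in column `σ i`. -/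
def Pmat {ι : Type*} [DecidableEq ι] (R : Type*) [Semiring R] (σ : Equiv.Perm ι) :
    Matrix ι ι R := Matrix.of fun i j => if j = σ i then 1 else 0

/-- The diagonal matrix `D_s = diag(1,…,q,…,1)` with `q` in position `s`. -/
noncomputable def Dmat {S : Type*} [DecidableEq S] (s : S) : Matrix S S (Polynomial ℚ) :=
  Matrix.diagonal fun t => if t = s then Polynomial.X else 1

/-- The permutation `ψ(s) : t ↦ s * t` attached to an element of a cycle set. -/
noncomputable def psi {S : Type*} (op : S → S → S) (hbij : ∀ s : S, Function.Bijective (op s))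
    (s : S) : Equiv.Perm S := Equiv.ofBijective (op s) (hbij s)

/-- The monomial matrix `Θ(s) = D_s P_{ψ(s)}` associated to a generator. -/
noncomputable def theta {S : Type*} [Fintype S] [DecidableEq S] (op : S → S → S)
    (hbij : ∀ s : S, Function.Bijective (op s)) (s : S) : Matrix S S (Polynomial ℚ) :=
  Dmat s * Pmat (Polynomial ℚ) (psi op hbij s)

namespace LVAux

variable {S : Type*}

/-- The monoid of pairs (cp-vector, permutation). -/
def CPMon (S : Type*) := (S → ℕ) × Equiv.Perm S

instance : Monoid (CPMon S) where
  mul a b := ⟨fun i => a.1 i + b.1 (a.2 i), b.2 * a.2⟩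
  one := ⟨fun _ => 0, 1⟩
  mul_assoc a b c := Prod.ext (funext fun i => add_assoc _ _ _) (mul_assoc c.2 b.2 a.2).symm
  one_mul a := Prod.ext (funext fun i => zero_add _) (mul_one a.2)
  mul_one a := Prod.ext (funext fun i => add_zero _) (one_mul a.2)

lemma cp_mul (a b : CPMon S) (i : S) : (a * b).1 i = a.1 i + b.1 (a.2 i) := rfl
lemma perm_mul (a b : CPMon S) : (a * b).2 = b.2 * a.2 := rfl
lemma cp_one (i : S) : (1 : CPMon S).1 i = 0 := rfl

variable [Fintype S] [DecidableEq S]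
variable (op : S → S → S) (hbij : ∀ s : S, Function.Bijective (op s))

noncomputable def gen (s : S) : CPMon S :=
  ⟨fun t => if t = s then 1 else 0, psi op hbij s⟩

noncomputable def Phi : FreeMonoid S →* CPMon S := FreeMonoid.lift (gen op hbij)

lemma Phi_of (s : S) : Phi op hbij (FreeMonoid.of s) = gen op hbij s :=
  FreeMonoid.lift_eval_of _ _

lemma Phi_cons_fst (s : S) (u : FreeMonoid S) (i : S) :
    (Phi op hbij (FreeMonoid.of s * u)).1 i
      = (if i = s then 1 else 0) + (Phi op hbij u).1 (op s i) := by
  rw [map_mul, Phi_of]; rfl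

lemma Phi_cons_snd (s : S) (u : FreeMonoid S) :
    (Phi op hbij (FreeMonoid.of s * u)).2 = (Phi op hbij u).2 * psi op hbij s := by
  rw [map_mul, Phi_of]; rfl

variable (hcs : ∀ s t u : S, op (op s t) (op s u) = op (op t s) (op t u))

include hcs in
lemma hker : conGen (csRel op) ≤ Con.ker (Phi op hbij) := by
  apply Con.conGen_le.mpr
  rintro a b ⟨s, t, rfl, rfl⟩
  rw [Con.ker_rel, map_mul, map_mul, Phi_of, Phi_of, Phi_of, Phi_of]
  refine Prod.ext ?_ ?_
  · funext i
    show (if i = s then 1 else 0) + (if op s i = op s t then 1 else 0)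
        = (if i = t then 1 else 0) + (if op t i = op t s then 1 else 0)
    simp only [(hbij s).injective.eq_iff, (hbij t).injective.eq_iff]
    exact add_comm _ _
  · show psi op hbij (op s t) * psi op hbij s = psi op hbij (op t s) * psi op hbij t
    ext i
    show op (op s t) (op s i) = op (op t s) (op t i)
    exact hcs s t i

lemma free_cases (w : FreeMonoid S) : w = 1 ∨ ∃ t u, w = FreeMonoid.of t * u := by
  induction w using FreeMonoid.recOn with
  | one => exact Or.inl rfl
  | of_mul x xs _ => exact Or.inr ⟨x, xs, rfl⟩

lemma sum_Phi_fst (w : FreeMonoid S) :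
    ∑ i, (Phi op hbij w).1 i = w.length := by
  induction w using FreeMonoid.recOn with
  | one => simp [map_one, cp_one]
  | of_mul s u ih =>
    have : ∀ i, (Phi op hbij (FreeMonoid.of s * u)).1 i
        = (if i = s then 1 else 0) + (Phi op hbij u).1 (op s i) :=
      Phi_cons_fst op hbij s u
    rw [Finset.sum_congr rfl (fun i _ => this i), Finset.sum_add_distrib,
      Finset.sum_ite_eq' Finset.univ s (fun _ => 1)]
    have hcomp : ∑ i, (Phi op hbij u).1 (op s i) = ∑ i, (Phi op hbij u).1 i :=
      Equiv.sum_comp (psi op hbij s) ((Phi op hbij u).1)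
    rw [hcomp, ih, FreeMonoid.length_mul, FreeMonoid.length_of]
    simp

lemma exists_head (w : FreeMonoid S) :
    ∀ t : S, 1 ≤ (Phi op hbij w).1 t →
      ∃ v, conGen (csRel op) w (FreeMonoid.of t * v) := by
  induction w using FreeMonoid.recOn with
  | one =>
    intro t ht
    rw [map_one] at ht
    exact absurd ht (Nat.not_succ_le_zero 0)
  | of_mul s u ih =>
    intro t ht
    by_cases hts : t = s
    · subst hts
      exact ⟨u, (conGen (csRel op)).refl _⟩
    · have h1 : 1 ≤ (Phi op hbij u).1 (op s t) := by
        rw [Phi_cons_fst op hbij s u t, if_neg hts, zero_add] at ht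
        exact ht
      obtain ⟨v', hv'⟩ := ih (op s t) h1
      refine ⟨FreeMonoid.of (op t s) * v', ?_⟩
      have h2 : conGen (csRel op) (FreeMonoid.of s * u)
          (FreeMonoid.of s * (FreeMonoid.of (op s t) * v')) :=
        (conGen (csRel op)).mul ((conGen (csRel op)).refl _) hv'
      have h3 : conGen (csRel op)
          ((FreeMonoid.of s * FreeMonoid.of (op s t)) * v')
          ((FreeMonoid.of t * FreeMonoid.of (op t s)) * v') :=
        (conGen (csRel op)).mul (ConGen.Rel.of _ _ ⟨s, t, rfl, rfl⟩)
          ((conGen (csRel op)).refl v')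
      refine (conGen (csRel op)).trans h2 ?_
      simpa only [mul_assoc] using h3

include hcs in
lemma cp_inj_word : ∀ (n : ℕ) (w₁ w₂ : FreeMonoid S), w₁.length = n →
    (Phi op hbij w₁).1 = (Phi op hbij w₂).1 → conGen (csRel op) w₁ w₂ := by
  intro n
  induction n using Nat.strong_induction_on with
  | _ n ihn =>
    intro w₁ w₂ hlen hcp
    have hlen₂ : w₂.length = n := by
      rw [← sum_Phi_fst op hbij w₂, ← hcp, sum_Phi_fst op hbij w₁, hlen]
    match n, hlen, hlen₂, ihn with
    | 0, hlen, hlen₂, ihn =>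
      have e1 : w₁ = 1 := by
        rcases free_cases w₁ with h | ⟨t, u, rfl⟩
        · exact h
        · rw [FreeMonoid.length_mul, FreeMonoid.length_of] at hlen; omega
      have e2 : w₂ = 1 := by
        rcases free_cases w₂ with h | ⟨t, u, rfl⟩
        · exact h
        · rw [FreeMonoid.length_mul, FreeMonoid.length_of] at hlen₂; omega
      rw [e1, e2]
      exact (conGen (csRel op)).refl _
    | (m + 1), hlen, hlen₂, ihn =>
      have hex : ∃ t u, w₂ = FreeMonoid.of t * u := by
        rcases free_cases w₂ with h | h
        · rw [h, FreeMonoid.length_one] at hlen₂; omega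
        · exact h
      obtain ⟨t, u₂, rfl⟩ := hex
      have ht : 1 ≤ (Phi op hbij w₁).1 t := by
        rw [hcp, Phi_cons_fst op hbij t u₂ t, if_pos rfl]
        exact Nat.le_add_right 1 _
      obtain ⟨v, hv⟩ := exists_head op hbij w₁ t ht
      have hPhi : Phi op hbij w₁ = Phi op hbij (FreeMonoid.of t * v) :=
        (Con.ker_rel _).mp (hker op hbij hcs hv)
      have hcpv : (Phi op hbij v).1 = (Phi op hbij u₂).1 := by
        funext j
        obtain ⟨i, rfl⟩ := (hbij t).surjective j
        have h4 : (Phi op hbij (FreeMonoid.of t * v)).1 i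
            = (Phi op hbij (FreeMonoid.of t * u₂)).1 i := by
          rw [← hPhi, hcp]
        rw [Phi_cons_fst op hbij t v i, Phi_cons_fst op hbij t u₂ i] at h4
        exact Nat.add_left_cancel h4
      have hlv : v.length = m := by
        have h5 : (FreeMonoid.of t * v).length = m + 1 := by
          rw [← sum_Phi_fst op hbij, ← hPhi, sum_Phi_fst op hbij w₁, hlen]
        rw [FreeMonoid.length_mul, FreeMonoid.length_of] at h5
        omega
      have hrec := ihn m (Nat.lt_succ_self m) v u₂ hlv hcpv
      exact (conGen (csRel op)).trans hv
        ((conGen (csRel op)).mul ((conGen (csRel op)).refl (FreeMonoid.of t)) hrec)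

lemma cp_surj : ∀ (n : ℕ) (d : S → ℕ), (∑ i, d i) = n →
    ∃ w : FreeMonoid S, (Phi op hbij w).1 = d := by
  intro n
  induction n with
  | zero =>
    intro d hd
    refine ⟨1, ?_⟩
    rw [map_one]
    funext i
    have := Finset.sum_eq_zero_iff.mp hd i (Finset.mem_univ i)
    exact (cp_one i).trans this.symm
  | succ m ihm =>
    intro d hd
    have hex : ∃ i, d i ≠ 0 := by
      by_contra hc
      push_neg at hc
      rw [Finset.sum_eq_zero (fun i _ => hc i)] at hd
      exact Nat.succ_ne_zero m hd.symm
    obtain ⟨i₀, hi₀⟩ := hex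
    have hdd : ∀ j, (d j - (if j = i₀ then 1 else 0)) + (if j = i₀ then 1 else 0) = d j := by
      intro j
      by_cases hj : j = i₀
      · subst hj; rw [if_pos rfl]; omega
      · rw [if_neg hj]; omega
    have hsum : ∑ j, (d j - (if j = i₀ then 1 else 0)) = m := by
      have h6 : ∑ j, ((d j - (if j = i₀ then 1 else 0)) + (if j = i₀ then 1 else 0)) = m + 1 := by
        rw [Finset.sum_congr rfl (fun j _ => hdd j)]; exact hd
      rw [Finset.sum_add_distrib, Finset.sum_ite_eq' Finset.univ i₀ (fun _ => 1)] at h6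
      simpa using h6
    obtain ⟨w, hw⟩ := ihm _ hsum
    refine ⟨w * FreeMonoid.of ((Phi op hbij w).2 i₀), ?_⟩
    funext j
    rw [map_mul, Phi_of]
    show (Phi op hbij w).1 j
        + (if (Phi op hbij w).2 j = (Phi op hbij w).2 i₀ then 1 else 0) = d j
    rw [hw]
    simp only [Equiv.apply_eq_iff_eq]
    exact hdd j

/-! Matrix side -/

noncomputable def matOf (a : CPMon S) : Matrix S S (Polynomial ℚ) :=
  Matrix.diagonal (fun j => (Polynomial.X : Polynomial ℚ) ^ a.1 j) * Pmat (Polynomial ℚ) a.2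

lemma Pmat_mul_diagonal (σ : Equiv.Perm S) (g : S → Polynomial ℚ) :
    Pmat (Polynomial ℚ) σ * Matrix.diagonal g
      = Matrix.diagonal (fun i => g (σ i)) * Pmat (Polynomial ℚ) σ := by
  ext i k
  rw [Matrix.mul_diagonal, Matrix.diagonal_mul]
  by_cases h : k = σ i
  · subst h; simp [Pmat]
  · simp [Pmat, h]

lemma Pmat_mul_Pmat (σ τ : Equiv.Perm S) :
    Pmat (Polynomial ℚ) σ * Pmat (Polynomial ℚ) τ = Pmat (Polynomial ℚ) (τ * σ) := by
  ext i k : 1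
  rw [Matrix.mul_apply]
  have h7 : ∀ j, (Pmat (Polynomial ℚ) σ i j) * (Pmat (Polynomial ℚ) τ j k)
      = if j = σ i then (if k = τ j then 1 else 0) else 0 := by
    intro j
    by_cases hj : j = σ i <;> simp [Pmat, hj]
  rw [Finset.sum_congr rfl (fun j _ => h7 j),
    Finset.sum_ite_eq' Finset.univ (σ i) (fun j => if k = τ j then (1 : Polynomial ℚ) else 0)]
  simp [Pmat, Equiv.Perm.mul_apply]
  congr

lemma Pmat_one : Pmat (Polynomial ℚ) (1 : Equiv.Perm S) = 1 := by
  ext i j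
  simp [Pmat, Matrix.one_apply, eq_comm]

lemma matOf_one : matOf (1 : CPMon S) = 1 := by
  show Matrix.diagonal (fun _ : S => (Polynomial.X : Polynomial ℚ) ^ (0 : ℕ))
      * Pmat (Polynomial ℚ) (1 : Equiv.Perm S) = 1
  rw [Pmat_one]
  simp

lemma matOf_mul (a b : CPMon S) : matOf (a * b) = matOf a * matOf b := by
  unfold matOf
  rw [Matrix.mul_assoc, ← Matrix.mul_assoc (Pmat (Polynomial ℚ) a.2), Pmat_mul_diagonal,
    Matrix.mul_assoc, Pmat_mul_Pmat, ← Matrix.mul_assoc, Matrix.diagonal_mul_diagonal]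
  have h8 : (fun j => (Polynomial.X : Polynomial ℚ) ^ (a * b).1 j)
      = fun i => Polynomial.X ^ a.1 i * Polynomial.X ^ b.1 (a.2 i) := by
    funext i; rw [cp_mul, pow_add]
  rw [h8, perm_mul]

lemma theta_eq_matOf_gen (x : S) : theta op hbij x = matOf (gen op hbij x) := by
  unfold theta matOf gen Dmat
  congr 1
  funext t
  by_cases h : t = x <;> simp [h]

lemma matOf_comp_eq {c c' : S → ℕ} {σ σ' : Equiv.Perm S}
    (h : Matrix.diagonal (fun j => (Polynomial.X : Polynomial ℚ) ^ c j) * Pmat (Polynomial ℚ) σ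
      = Matrix.diagonal (fun j => (Polynomial.X : Polynomial ℚ) ^ c' j) * Pmat (Polynomial ℚ) σ') :
    c = c' ∧ σ = σ' := by
  have key : ∀ i, c i = c' i ∧ σ i = σ' i := by
    intro i
    have h1 : (Matrix.diagonal (fun j => (Polynomial.X : Polynomial ℚ) ^ c j)
          * Pmat (Polynomial ℚ) σ) i (σ i)
        = (Matrix.diagonal (fun j => (Polynomial.X : Polynomial ℚ) ^ c' j)
          * Pmat (Polynomial ℚ) σ') i (σ i) := by rw [h]
    rw [Matrix.diagonal_mul, Matrix.diagonal_mul] at h1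
    rw [show Pmat (Polynomial ℚ) σ i (σ i) = 1 from by simp [Pmat], mul_one] at h1
    by_cases hσ : σ i = σ' i
    · rw [show Pmat (Polynomial ℚ) σ' i (σ i) = 1 from by simp [Pmat, hσ], mul_one] at h1
      have h2 := congrArg Polynomial.natDegree h1
      rw [Polynomial.natDegree_X_pow, Polynomial.natDegree_X_pow] at h2
      exact ⟨h2, hσ⟩
    · rw [show Pmat (Polynomial ℚ) σ' i (σ i) = 0 from by simp [Pmat, hσ],
        mul_zero] at h1
      exact absurd h1 (pow_ne_zero _ Polynomial.X_ne_zero)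
  exact ⟨funext fun i => (key i).1, Equiv.ext fun i => (key i).2⟩

include hcs in
noncomputable def PhiQ : StructureMonoid op →* CPMon S :=
  Con.lift _ (Phi op hbij) (hker op hbij hcs)

lemma PhiQ_mk (w : FreeMonoid S) :
    PhiQ op hbij hcs ((conGen (csRel op)).mk' w) = Phi op hbij w :=
  Con.lift_mk' _ _

lemma theta_eq (Θ : StructureMonoid op →* Matrix S S (Polynomial ℚ))
    (hΘ : ∀ s : S, Θ (mkM op s) = theta op hbij s) :
    ∀ g : StructureMonoid op, Θ g = matOf (PhiQ op hbij hcs g) := by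
  intro g
  induction g using Con.induction_on with
  | _ w =>
    induction w using FreeMonoid.recOn with
    | one =>
      have e : ((1 : FreeMonoid S) : StructureMonoid op) = 1 := rfl
      rw [e, map_one, map_one]
      exact matOf_one.symm
    | of_mul x xs ih =>
      have e : ((FreeMonoid.of x * xs : FreeMonoid S) : StructureMonoid op)
          = (FreeMonoid.of x : FreeMonoid S) * (xs : FreeMonoid S) := rfl
      rw [e, map_mul, map_mul, matOf_mul, ih]
      congr 1
      have e2 : ((FreeMonoid.of x : FreeMonoid S) : StructureMonoid op) = mkM op x := rfl
      rw [e2, hΘ x, mkM, PhiQ_mk, Phi_of]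
      exact theta_eq_matOf_gen op hbij x

lemma cp_inj_quot (a b : StructureMonoid op)
    (h : (PhiQ op hbij hcs a).1 = (PhiQ op hbij hcs b).1) : a = b := by
  induction a, b using Con.induction_on₂ with
  | _ u v =>
    have hu : PhiQ op hbij hcs (u : StructureMonoid op) = Phi op hbij u := Con.lift_mk' _ _
    have hv : PhiQ op hbij hcs (v : StructureMonoid op) = Phi op hbij v := Con.lift_mk' _ _
    rw [hu, hv] at h
    exact ((conGen (csRel op)).eq).mpr (cp_inj_word op hbij hcs u.length u v rfl h)

end LVAux

/-- In the structure monoid of a finite cycle set, `g₁` left-divides `g₂` if and only if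
the coefficient-powers tuple of `g₁` is componentwise at most that of `g₂`. -/
theorem leftDvd_iff_cp_le {S : Type*} [Fintype S] [DecidableEq S] (op : S → S → S)
    (hbij : ∀ s : S, Function.Bijective (op s))
    (hcs : ∀ s t u : S, op (op s t) (op s u) = op (op t s) (op t u))
    (Θ : StructureMonoid op →* Matrix S S (Polynomial ℚ))
    (hΘ : ∀ s : S, Θ (mkM op s) = theta op hbij s)
    (g₁ g₂ : StructureMonoid op) (c₁ c₂ : S → ℕ) (σ₁ σ₂ : Equiv.Perm S)
    (hg₁ : Θ g₁ = Matrix.diagonal (fun j => (Polynomial.X : Polynomial ℚ) ^ c₁ j) *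
      Pmat (Polynomial ℚ) σ₁)
    (hg₂ : Θ g₂ = Matrix.diagonal (fun j => (Polynomial.X : Polynomial ℚ) ^ c₂ j) *
      Pmat (Polynomial ℚ) σ₂) :
    (∃ h : StructureMonoid op, g₂ = g₁ * h) ↔ ∀ i : S, c₁ i ≤ c₂ i := by
  classical
  have hθ := LVAux.theta_eq op hbij hcs Θ hΘ
  have h1 : (LVAux.PhiQ op hbij hcs g₁).1 = c₁ ∧ (LVAux.PhiQ op hbij hcs g₁).2 = σ₁ := by
    have e := (hθ g₁).symm.trans hg₁
    unfold LVAux.matOf at e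
    exact LVAux.matOf_comp_eq e
  have h2 : (LVAux.PhiQ op hbij hcs g₂).1 = c₂ ∧ (LVAux.PhiQ op hbij hcs g₂).2 = σ₂ := by
    have e := (hθ g₂).symm.trans hg₂
    unfold LVAux.matOf at e
    exact LVAux.matOf_comp_eq e
  obtain ⟨hc₁, hs₁⟩ := h1
  obtain ⟨hc₂, hs₂⟩ := h2
  constructor
  · rintro ⟨h, rfl⟩ i
    have e : (LVAux.PhiQ op hbij hcs (g₁ * h)).1 i
        = (LVAux.PhiQ op hbij hcs g₁).1 i
          + (LVAux.PhiQ op hbij hcs h).1 ((LVAux.PhiQ op hbij hcs g₁).2 i) := by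
      rw [map_mul]; rfl
    rw [hc₂, hc₁, hs₁] at e
    omega
  · intro hle
    set d : S → ℕ := fun j => c₂ (σ₁.symm j) - c₁ (σ₁.symm j) with hddef
    obtain ⟨w, hw⟩ := LVAux.cp_surj op hbij (∑ i, d i) d rfl
    refine ⟨(conGen (csRel op)).mk' w, ?_⟩
    refine (LVAux.cp_inj_quot op hbij hcs _ _ ?_).symm
    funext i
    rw [map_mul]
    show (LVAux.PhiQ op hbij hcs g₁).1 i
        + (LVAux.PhiQ op hbij hcs ((conGen (csRel op)).mk' w)).1
          ((LVAux.PhiQ op hbij hcs g₁).2 i) = (LVAux.PhiQ op hbij hcs g₂).1 i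
    rw [hc₁, hs₁, hc₂, LVAux.PhiQ_mk, hw]
    simp only [hddef, Equiv.symm_apply_apply]
    have := hle i
    omega
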